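/- With notation as above, let φ and ψ be the suspension flows of f with ceiling c_f and of g with ceiling c_g, respectively, and ĥ(x,s) = (h(x), s·c_g(h(x))/c_f(x)). Then for every (x,s) ∈ M_{c_f} and t ≥ 0, ĥ(φ_t(x,s)) = ψ_{τ_{(x,s)}(t)}(ĥ(x,s)), where τ_{(x,s)}(t) = [s + t − S^f_{n}(x)] · c_g(g^{n}(h(x)))/c_f(f^{n}(x)) − s·c_g(h(x))/c_f(x) + S^g_{n}(h(x)) with n = n_{s,t}(x). -/
import Mathlib

theorem hhat_equivalence {M N : Type*} (f : M → M) (g : N → N) (h : M → N)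
    (hconj : ∀ x, g (h x) = h (f x))
    (cf : M → ℝ) (cg : N → ℝ) (a : ℝ) (ha : 0 < a)
    (hcf : ∀ x, a ≤ cf x) (hcg : ∀ y, a ≤ cg y)
    (Sf : ℕ → M → ℝ) (hSf : ∀ n x, Sf n x = ∑ i ∈ Finset.range n, cf (f^[i] x))
    (Sg : ℕ → N → ℝ) (hSg : ∀ n y, Sg n y = ∑ i ∈ Finset.range n, cg (g^[i] y))
    (x : M) (s t : ℝ) (hs0 : 0 ≤ s) (hs : s < cf x) (ht : 0 ≤ t)
    (n : ℕ) (hn : Sf n x ≤ s + t ∧ s + t < Sf (n + 1) x)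
    (τ : ℝ)
    (hτ : τ = (s + t - Sf n x) * (cg (g^[n] (h x)) / cf (f^[n] x))
        - s * (cg (h x) / cf x) + Sg n (h x)) :
    -- the ψ-lap-number of (h x, s·cg(h x)/cf x) at time τ is also n,
    (Sg n (h x) ≤ s * (cg (h x) / cf x) + τ ∧
      s * (cg (h x) / cf x) + τ < Sg (n + 1) (h x)) ∧
    -- and ĥ(φ_t(x,s)) = ψ_τ(ĥ(x,s)):
    (h (f^[n] x), (s + t - Sf n x) * (cg (h (f^[n] x)) / cf (f^[n] x)))
      = (g^[n] (h x), s * (cg (h x) / cf x) + τ - Sg n (h x)) := by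
  have hcomm : ∀ m : ℕ, g^[m] (h x) = h (f^[m] x) := by
    intro m
    induction m with
    | zero => simp
    | succ k ih =>
      rw [Function.iterate_succ_apply', ih, hconj, Function.iterate_succ_apply']
  have hcfpos : ∀ z, 0 < cf z := fun z => lt_of_lt_of_le ha (hcf z)
  have hcgpos : ∀ y, 0 < cg y := fun y => lt_of_lt_of_le ha (hcg y)
  have hstep : Sf (n + 1) x = Sf n x + cf (f^[n] x) := by
    rw [hSf, hSf, Finset.sum_range_succ]
  have hgstep : Sg (n + 1) (h x) = Sg n (h x) + cg (g^[n] (h x)) := by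
    rw [hSg, hSg, Finset.sum_range_succ]
  have hA : 0 ≤ s + t - Sf n x := by linarith [hn.1]
  have hB : s + t - Sf n x < cf (f^[n] x) := by linarith [hn.2, hstep ▸ hn.2]
  have key : s * (cg (h x) / cf x) + τ
      = (s + t - Sf n x) * (cg (g^[n] (h x)) / cf (f^[n] x)) + Sg n (h x) := by
    rw [hτ]; ring
  constructor
  · constructor
    · rw [key]
      have : 0 ≤ (s + t - Sf n x) * (cg (g^[n] (h x)) / cf (f^[n] x)) :=
        mul_nonneg hA (le_of_lt (div_pos (hcgpos _) (hcfpos _)))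
      linarith
    · rw [key, hgstep]
      have : (s + t - Sf n x) * (cg (g^[n] (h x)) / cf (f^[n] x)) < cg (g^[n] (h x)) := by
        rw [div_eq_mul_inv, ← mul_assoc, mul_comm (s + t - Sf n x), mul_assoc]
        have h1 : (s + t - Sf n x) * (cf (f^[n] x))⁻¹ < 1 := by
          rw [← div_eq_mul_inv, div_lt_one (hcfpos _)]; exact hB
        calc cg (g^[n] (h x)) * ((s + t - Sf n x) * (cf (f^[n] x))⁻¹)
            < cg (g^[n] (h x)) * 1 := by
              exact mul_lt_mul_of_pos_left h1 (hcgpos _)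
          _ = cg (g^[n] (h x)) := mul_one _
      linarith
  · rw [← hcomm n, key]
    ring_nf
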